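/- arXiv:2006.11261 — 2 statements merged into one kernel-verified Lean document; each statement's English description precedes it below -/
import Mathlib

section
/- For an odd prime p and ψ ∈ 𝔽_p, the constant term of (x + y + x⁻¹ + y⁻¹ + ψ)^{p-1} over 𝔽_p equals the truncation at degree p-1 of the series ₂F₁(1/2, 1/2; 1 | ψ²/16) reduced mod p, i.e., Σ_{k=0}^{⌊(p-1)/2⌋} ((1/2)_k (1/2)_k / (k!)²) · (ψ²/16)^k interpreted in 𝔽_p (each coefficient being a p-integral rational number). -/
open Finset

lemma aux_ratCast (p : ℕ) [Fact p.Prime] (a b : ℕ) (hb : (b : ZMod p) ≠ 0) :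
    (((a : ℚ) / (b : ℚ) : ℚ) : ZMod p) = (a : ZMod p) / (b : ZMod p) := by
  have h : ((a:ℚ)/(b:ℚ)) = Rat.divInt (a:ℤ) (b:ℤ) := by
    rw [Rat.divInt_eq_div]; push_cast; ring
  rw [h, Rat.cast_divInt_of_ne_zero]
  · push_cast; ring
  · exact_mod_cast hb

lemma aux_poch (k : ℕ) :
    (ascPochhammer ℚ k).eval (1/2 : ℚ) = (2*k).factorial / (4^k * k.factorial) := by
  induction k with
  | zero => simp
  | succ n ih =>
      rw [ascPochhammer_succ_eval, ih]
      have h1 : (2*(n+1)) = (2*n+1) + 1 := by ring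
      rw [h1, Nat.factorial_succ, Nat.factorial_succ, Nat.factorial_succ]
      have h4 : (4:ℚ)^(n+1) = 4 * 4^n := by ring
      rw [h4]
      push_cast
      have h5 : ((2*n).factorial : ℚ) ≠ 0 := Nat.cast_ne_zero.mpr (Nat.factorial_ne_zero _)
      have h6 : ((n).factorial : ℚ) ≠ 0 := Nat.cast_ne_zero.mpr (Nat.factorial_ne_zero _)
      have h7 : (4:ℚ)^n ≠ 0 := by positivity
      field_simp
      ring

lemma aux_cb_fact (k : ℕ) :
    Nat.centralBinom k * (k.factorial * k.factorial) = (2*k).factorial := by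
  have h := Nat.choose_mul_factorial_mul_factorial (show k ≤ 2*k by omega)
  rw [show 2*k - k = k by omega] at h
  rw [Nat.centralBinom]; rw [← h]; ring

lemma aux_term_q (k : ℕ) :
    ((ascPochhammer ℚ k).eval (1/2 : ℚ)) * ((ascPochhammer ℚ k).eval (1/2 : ℚ)) /
      ((k.factorial : ℚ))^2 = ((Nat.centralBinom k ^ 2 : ℕ) : ℚ) / ((16^k : ℕ) : ℚ) := by
  rw [aux_poch]
  have h5 : ((2*k).factorial : ℚ) ≠ 0 := Nat.cast_ne_zero.mpr (Nat.factorial_ne_zero _)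
  have h6 : ((k).factorial : ℚ) ≠ 0 := Nat.cast_ne_zero.mpr (Nat.factorial_ne_zero _)
  have h7 : (4:ℚ)^k ≠ 0 := by positivity
  have h8 : (16:ℚ)^k ≠ 0 := by positivity
  have hcb : ((Nat.centralBinom k : ℚ)) * (k.factorial * k.factorial) = (2*k).factorial := by
    exact_mod_cast congrArg (Nat.cast : ℕ → ℚ) (aux_cb_fact k)
  push_cast
  rw [div_mul_div_comm]
  rw [div_div, div_eq_div_iff (by positivity) (by positivity)]
  have h16 : (16:ℚ)^k = 4^k * 4^k := by rw [← mul_pow]; norm_num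
  rw [h16]
  linear_combination (-(4^k)*4^k*(((2*k).factorial:ℚ) + (k.centralBinom:ℚ)*((k.factorial:ℚ)*(k.factorial:ℚ)))) * hcb

lemma aux_term (p : ℕ) [Fact p.Prime] (h16 : (16 : ZMod p) ≠ 0) (k : ℕ) :
    ((((ascPochhammer ℚ k).eval (1/2:ℚ)) * ((ascPochhammer ℚ k).eval (1/2:ℚ)) /
        ((k.factorial:ℚ))^2 : ℚ) : ZMod p)
      = (Nat.centralBinom k : ZMod p)^2 / 16^k := by
  rw [aux_term_q, aux_ratCast p _ _ (by push_cast; exact pow_ne_zero _ h16)]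
  push_cast
  ring

lemma aux_choose_neg_one (p : ℕ) [hp : Fact p.Prime] :
    ∀ k, k ≤ p - 1 → (((p-1).choose k : ℕ) : ZMod p) = (-1)^k := by
  intro k
  induction k with
  | zero => simp
  | succ k ih =>
      intro h
      have hp1 : p - 1 + 1 = p := Nat.succ_pred_eq_of_pos hp.out.pos
      have hch : p.choose (k+1) = (p-1).choose k + (p-1).choose (k+1) := by
        rw [← hp1, Nat.choose_succ_succ]; rw [hp1]
      have hdvd : p ∣ p.choose (k+1) :=
        hp.out.dvd_choose_self (Nat.succ_ne_zero k) (by omega)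
      have hz : ((p.choose (k+1) : ℕ) : ZMod p) = 0 :=
        (ZMod.natCast_eq_zero_iff _ _).mpr hdvd
      rw [hch] at hz
      push_cast at hz
      have ihk := ih (by omega)
      rw [pow_succ]
      linear_combination hz - ihk

lemma aux_centralBinom_mod (p : ℕ) [hp : Fact p.Prime] (hodd : Odd p) :
    ∀ m, m ≤ (p-1)/2 → (Nat.centralBinom m : ZMod p)
      = (-4)^m * ((((p-1)/2).choose m : ℕ) : ZMod p) := by
  have hp2 : 2 ≤ p := hp.out.two_le
  have hs2n : 2 * ((p-1)/2) = p - 1 := by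
    obtain ⟨t, ht⟩ := hodd; omega
  set s := (p-1)/2 with hs
  have hslt : s < p := by omega
  have hs2 : 2*(s : ZMod p) + 1 = 0 := by
    have : ((2*s : ℕ) : ZMod p) = ((p-1 : ℕ) : ZMod p) := by rw [hs2n]
    push_cast at this
    have hpm : ((p-1 : ℕ) : ZMod p) = -1 := by
      rw [Nat.cast_sub (by omega)]
      simp
    rw [hpm] at this
    linear_combination this
  intro m
  induction m with
  | zero => simp [Nat.centralBinom]
  | succ m ih =>
      intro h
      have ihm := ih (by omega)
      have hne : ((m+1 : ℕ) : ZMod p) ≠ 0 := by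
        rw [Ne, ZMod.natCast_eq_zero_iff]
        intro hdvd
        have := Nat.le_of_dvd (by omega) hdvd
        omega
      have h1c : ((m+1 : ℕ) : ZMod p) * (Nat.centralBinom (m+1) : ℕ)
          = 2*(2*(m:ZMod p)+1) * (Nat.centralBinom m : ℕ) := by
        have := congrArg (Nat.cast : ℕ → ZMod p) (Nat.succ_mul_centralBinom_succ m)
        push_cast at this ⊢
        linear_combination this
      have h2c : ((s.choose (m+1) : ℕ) : ZMod p) * ((m+1:ℕ):ZMod p)
          = ((s.choose m : ℕ) : ZMod p) * ((s:ZMod p) - (m:ZMod p)) := by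
        have := congrArg (Nat.cast : ℕ → ZMod p) (Nat.choose_succ_right_eq s m)
        rw [Nat.cast_mul, Nat.cast_mul, Nat.cast_sub (by omega : m ≤ s)] at this
        push_cast at this ⊢
        linear_combination this
      apply mul_left_cancel₀ hne
      push_cast at h1c h2c ⊢
      linear_combination h1c + 2*(2*(m:ZMod p)+1)*ihm - ((-4 : ZMod p))^(m+1)*h2c
        + 2*((s.choose m : ℕ) : ZMod p)*(-4:ZMod p)^m*hs2

lemma aux_multi (a b c : ℕ) :
    Nat.multinomial Finset.univ ![a,b,a,b,c]
      = (2*(a+b)+c).choose (2*(a+b)) * (((a+b)+(a+b)).choose (a+b)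
          * ((a+b).choose a * (b+a).choose b)) := by
  have huniv : (Finset.univ : Finset (Fin 5)) = insert 0 (insert 1 (insert 2 (insert 3 {4}))) := by
    decide
  rw [huniv, Nat.multinomial_insert (by decide), Nat.multinomial_insert (by decide),
    Nat.multinomial_insert (by decide), Nat.multinomial_insert (by decide),
    Nat.multinomial_singleton]
  show (a + (b + (a + (b + c)))).choose a * ((b + (a + (b + c))).choose b
      * ((a + (b + c)).choose a * ((b + c).choose b * 1))) = _
  rw [← Nat.cast_inj (R := ℚ)]
  push_cast
  rw [Nat.cast_add_choose, Nat.cast_add_choose, Nat.cast_add_choose, Nat.cast_add_choose,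
    Nat.cast_add_choose, Nat.cast_add_choose, Nat.cast_add_choose, Nat.cast_add_choose]
  rw [show a + (b + (a + (b + c))) = 2*(a+b)+c from by ring,
    show (a+b) + (a+b) = 2*(a+b) from by ring,
    show b + a = a + b from by ring]
  have n1 : ((a.factorial : ℚ)) ≠ 0 := Nat.cast_ne_zero.mpr (Nat.factorial_ne_zero _)
  have n2 : ((b.factorial : ℚ)) ≠ 0 := Nat.cast_ne_zero.mpr (Nat.factorial_ne_zero _)
  have n3 : ((c.factorial : ℚ)) ≠ 0 := Nat.cast_ne_zero.mpr (Nat.factorial_ne_zero _)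
  have n4 : (((b + (a + (b + c))).factorial : ℚ)) ≠ 0 := Nat.cast_ne_zero.mpr (Nat.factorial_ne_zero _)
  have n5 : (((a + (b + c)).factorial : ℚ)) ≠ 0 := Nat.cast_ne_zero.mpr (Nat.factorial_ne_zero _)
  have n6 : (((b + c).factorial : ℚ)) ≠ 0 := Nat.cast_ne_zero.mpr (Nat.factorial_ne_zero _)
  have n7 : (((2*(a+b)).factorial : ℚ)) ≠ 0 := Nat.cast_ne_zero.mpr (Nat.factorial_ne_zero _)
  have n8 : (((a+b).factorial : ℚ)) ≠ 0 := Nat.cast_ne_zero.mpr (Nat.factorial_ne_zero _)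
  field_simp

open Finsupp Polynomial in
/-- The constant term of (x + y + x⁻¹ + y⁻¹ + ψ)^(p-1) over 𝔽_p equals the
truncation at degree p-1 of ₂F₁(1/2,1/2;1 | ψ²/16) reduced mod p. -/
theorem constant_term_eq_truncated_2F1 (p : ℕ) [Fact p.Prime] (hp : Odd p)
    (ψ : ZMod p) :
    let f : AddMonoidAlgebra (ZMod p) (ℤ × ℤ) :=
      AddMonoidAlgebra.single ((1 : ℤ), (0 : ℤ)) 1 + AddMonoidAlgebra.single (0, 1) 1 + AddMonoidAlgebra.single (-1, 0) 1 +
        AddMonoidAlgebra.single (0, -1) 1 + AddMonoidAlgebra.single (0, 0) ψ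
    (f ^ (p - 1)).coeff (0, 0) =
      ∑ k ∈ Finset.range ((p - 1) / 2 + 1),
        (((((ascPochhammer ℚ k).eval (1/2 : ℚ)) * ((ascPochhammer ℚ k).eval (1/2 : ℚ)) /
            ((k.factorial : ℚ))^2) : ℚ) : ZMod p) * (ψ ^ 2 / 16) ^ k := by
  intro f
  classical
  have hp2 : 2 ≤ p := (Fact.out : p.Prime).two_le
  obtain ⟨t, ht⟩ := id hp
  set s := (p-1)/2 with hs
  have hps : 2 * s = p - 1 := by omega
  have h2 : (2 : ZMod p) ≠ 0 := by
    have h : ((2:ℕ) : ZMod p) ≠ 0 := by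
      rw [Ne, ZMod.natCast_eq_zero_iff]
      intro h
      have := Nat.le_of_dvd (by omega) h
      omega
    simpa using h
  have h4 : (4 : ZMod p) ≠ 0 := by
    have : (4 : ZMod p) = 2^2 := by norm_num
    rw [this]; exact pow_ne_zero _ h2
  have h16 : (16 : ZMod p) ≠ 0 := by
    have : (16 : ZMod p) = 2^4 := by norm_num
    rw [this]; exact pow_ne_zero _ h2
  have h16s : (16 : ZMod p)^s = 1 := by
    have h1 : (16 : ZMod p)^s = (4:ZMod p)^(p-1) := by
      rw [show (16 : ZMod p) = 4^2 by norm_num, ← pow_mul, hps]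
    rw [h1, ZMod.pow_card_sub_one_eq_one h4]
  set G : Fin 5 → AddMonoidAlgebra (ZMod p) (ℤ × ℤ) :=
    ![AddMonoidAlgebra.single ((1:ℤ), (0:ℤ)) (1 : ZMod p), AddMonoidAlgebra.single (0, 1) 1, AddMonoidAlgebra.single (-1, 0) 1,
      AddMonoidAlgebra.single (0, -1) 1, AddMonoidAlgebra.single (0, 0) ψ] with hG
  have hf : f = ∑ i : Fin 5, G i := by
    rw [Fin.sum_univ_five]
    rfl
  rw [hf, Finset.sum_pow_eq_sum_piAntidiag, AddMonoidAlgebra.coeff_sum, Finsupp.finset_sum_apply]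
  have hprod : ∀ k : Fin 5 → ℕ, (∏ i, G i ^ k i) =
      AddMonoidAlgebra.single (((k 0 : ℤ) - k 2, (k 1 : ℤ) - k 3) : ℤ × ℤ) (ψ ^ k 4) := by
    intro k
    rw [Fin.prod_univ_five]
    simp only [hG, Matrix.cons_val_zero, Matrix.cons_val_one, Matrix.head_cons,
      Matrix.cons_val_two, Matrix.cons_val_three, Matrix.cons_val_four, Matrix.tail_cons,
      Matrix.head_fin_const]
    rw [AddMonoidAlgebra.single_pow, AddMonoidAlgebra.single_pow, AddMonoidAlgebra.single_pow,
      AddMonoidAlgebra.single_pow, AddMonoidAlgebra.single_pow,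
      AddMonoidAlgebra.single_mul_single, AddMonoidAlgebra.single_mul_single,
      AddMonoidAlgebra.single_mul_single, AddMonoidAlgebra.single_mul_single]
    congr 1
    · simp [Prod.ext_iff, sub_eq_add_neg]
    · simp
  have hstep1 : ∀ k : Fin 5 → ℕ,
      ((Nat.multinomial Finset.univ k : AddMonoidAlgebra (ZMod p) (ℤ × ℤ))
        * ∏ i, G i ^ k i).coeff ((0 : ℤ), (0 : ℤ))
      = if k 0 = k 2 ∧ k 1 = k 3
          then (Nat.multinomial Finset.univ k : ZMod p) * ψ ^ k 4 else 0 := by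
    intro k
    rw [← nsmul_eq_mul, AddMonoidAlgebra.coeff_smul_apply, hprod, AddMonoidAlgebra.coeff_single, Finsupp.single_apply, nsmul_eq_mul]
    simp only [Prod.mk.injEq, sub_eq_zero, Nat.cast_inj, mul_ite, mul_zero]
  rw [Finset.sum_congr rfl (fun k _ => hstep1 k), ← Finset.sum_filter]
  have hkfun : ∀ k : Fin 5 → ℕ, k 0 = k 2 → k 1 = k 3 →
      (![k 0, k 1, k 0, k 1, k 4] : Fin 5 → ℕ) = k := by
    intro k h02 h13
    funext i
    fin_cases i
    exacts [rfl, rfl, h02.symm ▸ rfl, h13.symm ▸ rfl, rfl]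
  have hbij : ∑ k ∈ Finset.filter (fun k : Fin 5 → ℕ => k 0 = k 2 ∧ k 1 = k 3)
        ((Finset.univ : Finset (Fin 5)).piAntidiag (p-1)),
          ((Nat.multinomial Finset.univ k : ZMod p) * ψ ^ k 4)
      = ∑ x ∈ (Finset.range (s+1)).sigma (fun m => Finset.HasAntidiagonal.antidiagonal m),
          ((Nat.multinomial Finset.univ
              ![x.2.1, x.2.2, x.2.1, x.2.2, p-1-2*x.1] : ZMod p) * ψ ^ (p-1-2*x.1)) := by
    apply Finset.sum_nbij' (fun k => (⟨k 0 + k 1, (k 0, k 1)⟩ : Σ _ : ℕ, ℕ × ℕ))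
      (fun x => ![x.2.1, x.2.2, x.2.1, x.2.2, p-1-2*x.1])
    · intro k hk
      simp only [Finset.mem_filter, Finset.mem_piAntidiag] at hk
      obtain ⟨⟨hsum, -⟩, h02, h13⟩ := hk
      rw [Fin.sum_univ_five] at hsum
      simp only [Finset.mem_sigma, Finset.mem_range, Finset.HasAntidiagonal.mem_antidiagonal]
      exact ⟨by omega, trivial⟩
    · intro x hx
      simp only [Finset.mem_sigma, Finset.mem_range, Finset.HasAntidiagonal.mem_antidiagonal] at hx
      simp only [Finset.mem_filter, Finset.mem_piAntidiag]
      refine ⟨⟨?_, fun i _ => Finset.mem_univ i⟩, rfl, rfl⟩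
      rw [Fin.sum_univ_five]
      show x.2.1 + x.2.2 + x.2.1 + x.2.2 + (p-1-2*x.1) = p - 1
      omega
    · intro k hk
      simp only [Finset.mem_filter, Finset.mem_piAntidiag] at hk
      obtain ⟨⟨hsum, -⟩, h02, h13⟩ := hk
      rw [Fin.sum_univ_five] at hsum
      show (![k 0, k 1, k 0, k 1, p - 1 - 2*(k 0 + k 1)] : Fin 5 → ℕ) = k
      rw [show p - 1 - 2*(k 0 + k 1) = k 4 by omega]
      exact hkfun k h02 h13
    · intro x hx
      simp only [Finset.mem_sigma, Finset.mem_range, Finset.HasAntidiagonal.mem_antidiagonal] at hx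
      rcases x with ⟨m, a, b⟩
      show (⟨a + b, (a, b)⟩ : Σ _ : ℕ, ℕ × ℕ) = ⟨m, (a, b)⟩
      obtain ⟨-, hab⟩ := hx
      dsimp only at hab
      subst hab
      rfl
    · intro k hk
      simp only [Finset.mem_filter, Finset.mem_piAntidiag] at hk
      obtain ⟨⟨hsum, -⟩, h02, h13⟩ := hk
      rw [Fin.sum_univ_five] at hsum
      show _ = (Nat.multinomial Finset.univ
          (![k 0, k 1, k 0, k 1, p - 1 - 2*(k 0 + k 1)] : Fin 5 → ℕ) : ZMod p)
            * ψ ^ (p-1-2*(k 0 + k 1))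
      rw [show p - 1 - 2*(k 0 + k 1) = k 4 by omega, hkfun k h02 h13]
  rw [hbij, Finset.sum_sigma]
  have hinner : ∀ m, m ≤ s →
      ∑ ab ∈ Finset.HasAntidiagonal.antidiagonal m,
          ((Nat.multinomial Finset.univ ![ab.1, ab.2, ab.1, ab.2, p-1-2*m] : ZMod p)
            * ψ ^ (p-1-2*m))
        = (((m+m).choose m : ℕ) : ZMod p)^2 * ψ ^ (p-1-2*m) := by
    intro m hm
    have h2m : 2*m ≤ p-1 := by omega
    have step1 : ∀ ab ∈ Finset.HasAntidiagonal.antidiagonal m,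
        ((Nat.multinomial Finset.univ ![ab.1, ab.2, ab.1, ab.2, p-1-2*m] : ZMod p)
            * ψ ^ (p-1-2*m))
          = ((m.choose ab.1 * m.choose ab.2 : ℕ) : ZMod p)
            * ((((p-1).choose (2*m) * ((m+m).choose m) : ℕ) : ZMod p) * ψ ^ (p-1-2*m)) := by
      intro ab hab
      rw [Finset.HasAntidiagonal.mem_antidiagonal] at hab
      rw [aux_multi, hab, show ab.2 + ab.1 = m by omega,
        show 2*m + (p-1-2*m) = p-1 by omega]
      push_cast
      ring
    rw [Finset.sum_congr rfl step1, ← Finset.sum_mul, ← Nat.cast_sum, ← Nat.add_choose_eq]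
    have hneg : ((-1 : ZMod p))^(2*m) = 1 := by
      rw [pow_mul]; norm_num
    push_cast
    rw [aux_choose_neg_one p (2*m) h2m, hneg]
    ring
  rw [Finset.sum_congr rfl (fun m hm =>
    hinner m (by rw [Finset.mem_range] at hm; omega))]
  rw [← Finset.sum_range_reflect]
  apply Finset.sum_congr rfl
  intro k hk
  rw [Finset.mem_range] at hk
  have hks : k ≤ s := by omega
  rw [show s + 1 - 1 - k = s - k by omega]
  rw [aux_term p h16 k]
  rw [show ((s-k) + (s-k)).choose (s-k) = Nat.centralBinom (s-k) by
    rw [Nat.centralBinom, two_mul]]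
  rw [aux_centralBinom_mod p ⟨t, by omega⟩ (s-k) (by omega),
    aux_centralBinom_mod p ⟨t, by omega⟩ k hks]
  rw [Nat.choose_symm hks]
  rw [show p - 1 - 2*(s-k) = 2*k by omega]
  have hpow : ∀ x : ℕ, ((-4 : ZMod p)^x)^2 = 16^x := by
    intro x
    rw [← pow_mul, mul_comm, pow_mul]
    norm_num
  rw [mul_pow, mul_pow, hpow, hpow]
  have h16k : (16 : ZMod p)^k ≠ 0 := pow_ne_zero _ h16
  have hks16 : (16:ZMod p)^(s-k) * 16^k = 1 := by
    rw [← pow_add, show s-k+k = s by omega, h16s]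
  rw [div_pow, ← pow_mul]
  field_simp
  rw [← hs]
  linear_combination ((s.choose k : ZMod p))^2 * ψ^(2*k) * hks16
end

section
/- Clausen's formula in the special case a = 1/6, b = 1/3: as formal power series, ₂F₁(1/6, 1/3; 1 | z)² = ₃F₂(1/2, 1/3, 2/3; 1, 1 | z). -/
open Polynomial Finset

/-- Coefficient of ₂F₁(1/6,1/3;1|z). -/
noncomputable def clausenA (k : ℕ) : ℚ :=
  (ascPochhammer ℚ k).eval (1/6 : ℚ) * (ascPochhammer ℚ k).eval (1/3 : ℚ) /
    ((k.factorial : ℚ) * (k.factorial : ℚ))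

/-- Coefficient of ₃F₂(1/2,1/3,2/3;1,1|z). -/
noncomputable def clausenB (k : ℕ) : ℚ :=
  (ascPochhammer ℚ k).eval (1/2 : ℚ) * (ascPochhammer ℚ k).eval (1/3 : ℚ) *
    (ascPochhammer ℚ k).eval (2/3 : ℚ) / ((k.factorial : ℚ)) ^ 3

/-- WZ certificate numerator. -/
def clausenN (n j : ℚ) : ℚ :=
  2*j^5 - (4 + 7*n)*j^4 + (29/18 + 17/2*n + 8*n^2)*j^3
    - (1/6 + 5/3*n + 9/2*n^2 + 3*n^3)*j^2

/-- WZ certificate function. -/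
noncomputable def clausenG (n j : ℕ) : ℚ :=
  clausenN n j * clausenA j * clausenA (n+1-j) /
    ((((n+1-j : ℕ) : ℚ) - 5/6) * (((n+1-j : ℕ) : ℚ) - 2/3))

/-- Partial Cauchy-product sums. -/
noncomputable def clausenS (n : ℕ) : ℚ :=
  ∑ j ∈ Finset.range (n+1), clausenA j * clausenA (n - j)

lemma clausenA_zero : clausenA 0 = 1 := by
  simp [clausenA]

lemma clausenB_zero : clausenB 0 = 1 := by
  simp [clausenB]

lemma clausenA_succ (k : ℕ) :
    clausenA (k+1) = clausenA k * (((k:ℚ) + 1/6) * ((k:ℚ) + 1/3)) / ((k:ℚ)+1)^2 := by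
  have hf : ((k.factorial : ℚ)) ≠ 0 := by exact_mod_cast k.factorial_ne_zero
  have hk1 : ((k:ℚ) + 1) ≠ 0 := by positivity
  simp only [clausenA, ascPochhammer_succ_right, Polynomial.eval_mul, Polynomial.eval_add,
    Polynomial.eval_X, Polynomial.eval_natCast, Nat.factorial_succ, Nat.cast_mul,
    Nat.cast_add, Nat.cast_one]
  field_simp
  ring

lemma clausenB_succ (k : ℕ) :
    ((k:ℚ)+1)^3 * clausenB (k+1)
      = ((k:ℚ) + 1/2) * ((k:ℚ) + 1/3) * ((k:ℚ) + 2/3) * clausenB k := by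
  have hf : ((k.factorial : ℚ)) ≠ 0 := by exact_mod_cast k.factorial_ne_zero
  have hk1 : ((k:ℚ) + 1) ≠ 0 := by positivity
  simp only [clausenB, ascPochhammer_succ_right, Polynomial.eval_mul, Polynomial.eval_add,
    Polynomial.eval_X, Polynomial.eval_natCast, Nat.factorial_succ, Nat.cast_mul,
    Nat.cast_add, Nat.cast_one]
  field_simp
  ring

lemma cast56 (m : ℕ) : ((m:ℚ)) - 5/6 ≠ 0 := by
  intro h
  have h2 : ((6*m : ℕ) : ℚ) = ((5 : ℕ) : ℚ) := by push_cast; linarith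
  have := Nat.cast_inj.mp h2
  omega

lemma cast23 (m : ℕ) : ((m:ℚ)) - 2/3 ≠ 0 := by
  intro h
  have h2 : ((3*m : ℕ) : ℚ) = ((2 : ℕ) : ℚ) := by push_cast; linarith
  have := Nat.cast_inj.mp h2
  omega

lemma clausenA_succ_mul (k : ℕ) :
    clausenA (k+1) * ((k:ℚ)+1)^2 = clausenA k * (((k:ℚ) + 1/6) * ((k:ℚ) + 1/3)) := by
  have hk1 : (((k:ℚ) + 1)^2) ≠ 0 := by positivity
  rw [clausenA_succ]
  field_simp

set_option maxHeartbeats 2000000 in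
/-- The key WZ-style pointwise identity, stated for `n = j + m`. -/
lemma clausen_key (j m : ℕ) :
    ((j:ℚ)+(m:ℚ)+1)^3 * (clausenA j * clausenA (m+1))
      - ((j:ℚ)+(m:ℚ)+1/2) * ((j:ℚ)+(m:ℚ)+1/3) * ((j:ℚ)+(m:ℚ)+2/3)
          * (clausenA j * clausenA m)
    = clausenN ((j:ℚ)+(m:ℚ)) ((j:ℚ)+1) * clausenA (j+1) * clausenA m /
        (((m:ℚ) - 5/6) * ((m:ℚ) - 2/3))
      - clausenN ((j:ℚ)+(m:ℚ)) (j:ℚ) * clausenA j * clausenA (m+1) /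
        ((((m:ℚ)+1) - 5/6) * (((m:ℚ)+1) - 2/3)) := by
  have hst : (((m:ℚ) - 5/6) * ((m:ℚ) - 2/3)) ≠ 0 := mul_ne_zero (cast56 m) (cast23 m)
  have h3 : ((m:ℚ)+1) - 5/6 ≠ 0 := by
    have := cast56 (m+1); push_cast at this; exact this
  have h4 : ((m:ℚ)+1) - 2/3 ≠ 0 := by
    have := cast23 (m+1); push_cast at this; exact this
  have huv : ((((m:ℚ)+1) - 5/6) * (((m:ℚ)+1) - 2/3)) ≠ 0 := mul_ne_zero h3 h4
  rw [div_sub_div _ _ hst huv, eq_div_iff (mul_ne_zero hst huv)]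
  have e1 := clausenA_succ_mul m
  have e2 := clausenA_succ_mul j
  have hM : ((((j:ℚ)+1)^2) * (((m:ℚ)+1)^2)) ≠ 0 := by positivity
  apply mul_left_cancel₀ hM
  set x := ((j:ℚ)) with hx
  set y := ((m:ℚ)) with hy
  simp only [clausenN]
  linear_combination
    ((x+1)^2 * clausenA j * (((y-5/6)*(y-2/3)) * ((x+y+1)^3*((y+1/6)*(y+1/3))
      + (2*x^5 - (4 + 7*(x+y))*x^4 + (29/18 + 17/2*(x+y) + 8*(x+y)^2)*x^3
          - (1/6 + 5/3*(x+y) + 9/2*(x+y)^2 + 3*(x+y)^3)*x^2)))) * e1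
    + ((y+1)^2 * clausenA m * (-((y+1/6)*(y+1/3))
        * (2*(x+1)^5 - (4 + 7*(x+y))*(x+1)^4 + (29/18 + 17/2*(x+y) + 8*(x+y)^2)*(x+1)^3
            - (1/6 + 5/3*(x+y) + 9/2*(x+y)^2 + 3*(x+y)^3)*(x+1)^2))) * e2

lemma clausenG_zero_right (n : ℕ) : clausenG n 0 = 0 := by
  simp [clausenG, clausenN]

lemma clausenG_top (n : ℕ) :
    clausenG n (n+1) = -(((n:ℚ)+1)^3 * clausenA (n+1)) := by
  have e : n + 1 - (n + 1) = 0 := by omega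
  have hN : clausenN ((n:ℕ):ℚ) (((n+1:ℕ)):ℚ) = -(5/9) * ((n:ℚ)+1)^3 := by
    push_cast [clausenN]; ring
  simp only [clausenG, e, hN, clausenA_zero, Nat.cast_zero]
  norm_num
  ring

lemma clausenS_rec (n : ℕ) :
    ((n:ℚ)+1)^3 * clausenS (n+1)
      = ((n:ℚ)+1/2) * ((n:ℚ)+1/3) * ((n:ℚ)+2/3) * clausenS n := by
  have step : ∀ j ∈ Finset.range (n+1),
      ((n:ℚ)+1)^3 * (clausenA j * clausenA (n+1-j))
        - ((n:ℚ)+1/2) * ((n:ℚ)+1/3) * ((n:ℚ)+2/3) * (clausenA j * clausenA (n-j))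
      = clausenG n (j+1) - clausenG n j := by
    intro j hj
    have hj' : j ≤ n := by simpa [Nat.lt_succ_iff] using hj
    set m := n - j with hmdef
    have hm : j + m = n := by omega
    have e1 : n + 1 - j = m + 1 := by omega
    have e2 : n - j = m := by omega
    have e3 : n + 1 - (j+1) = m := by omega
    have e4 : (n:ℚ) = (j:ℚ) + (m:ℚ) := by rw [← hm]; push_cast; ring
    simp only [clausenG, e1, e2, e3, e4]
    push_cast
    linear_combination clausen_key j m
  have tel : ∑ j ∈ Finset.range (n+1), (clausenG n (j+1) - clausenG n j)
      = clausenG n (n+1) - clausenG n 0 := Finset.sum_range_sub (clausenG n) (n+1)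
  have hsum : ∑ j ∈ Finset.range (n+1),
      (((n:ℚ)+1)^3 * (clausenA j * clausenA (n+1-j))
        - ((n:ℚ)+1/2) * ((n:ℚ)+1/3) * ((n:ℚ)+2/3) * (clausenA j * clausenA (n-j)))
      = clausenG n (n+1) - clausenG n 0 := by
    rw [← tel]; exact Finset.sum_congr rfl step
  rw [Finset.sum_sub_distrib, ← Finset.mul_sum, ← Finset.mul_sum] at hsum
  have expand : clausenS (n+1)
      = (∑ j ∈ Finset.range (n+1), clausenA j * clausenA (n+1-j))
        + clausenA (n+1) * clausenA (n+1-(n+1)) := Finset.sum_range_succ _ _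
  have e0 : n + 1 - (n + 1) = 0 := by omega
  rw [e0, clausenA_zero, mul_one] at expand
  rw [clausenG_top, clausenG_zero_right] at hsum
  rw [expand]
  unfold clausenS
  linarith [hsum]

lemma clausenS_eq_clausenB (n : ℕ) : clausenS n = clausenB n := by
  induction n with
  | zero => simp [clausenS, clausenA_zero, clausenB_zero]
  | succ n ih =>
    have h3 : (((n:ℚ)+1)^3) ≠ 0 := by positivity
    have := clausenS_rec n
    rw [ih, ← clausenB_succ n] at this
    exact mul_left_cancel₀ h3 this

open Polynomial PowerSeries in
/-- Clausen's formula with a = 1/6, b = 1/3: as formal power series,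
₂F₁(1/6,1/3;1 | z)² = ₃F₂(1/2,1/3,2/3;1,1 | z). -/
theorem clausen_one_sixth_one_third :
    (PowerSeries.mk fun k =>
      (ascPochhammer ℚ k).eval (1/6 : ℚ) * (ascPochhammer ℚ k).eval (1/3 : ℚ) /
        ((k.factorial : ℚ) * (k.factorial : ℚ))) ^ 2 =
    (PowerSeries.mk fun k =>
      (ascPochhammer ℚ k).eval (1/2 : ℚ) * (ascPochhammer ℚ k).eval (1/3 : ℚ) *
        (ascPochhammer ℚ k).eval (2/3 : ℚ) / ((k.factorial : ℚ)) ^ 3) := by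
  rw [sq]
  ext n
  rw [PowerSeries.coeff_mul]
  simp only [PowerSeries.coeff_mk]
  rw [Finset.Nat.sum_antidiagonal_eq_sum_range_succ_mk]
  exact clausenS_eq_clausenB n
end
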